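/- Let $(\Omega, P)$ be a finite probability space, let $V = (V_1, \dots, V_n)$ be a random variable whose distribution $P_V$ is a product distribution $P_{V_1} \times \dots \times P_{V_n}$, and let $F$ be an event with $P[F] > 0$. Then $\frac{1}{n} \sum_{i=1}^n \| P_{V_i | F} - P_{V_i} \|_1 \le \sqrt{\frac{2}{n} \log_2 \frac{1}{P[F]}}$. -/

import Mathlib

private lemma log_ge_one_sub_inv {t : ℝ} (ht : 0 < t) : 1 - 1/t ≤ Real.log t := by
  have h := Real.log_le_sub_one_of_pos (show (0:ℝ) < 1/t by positivity)
  rw [show (1:ℝ)/t = t⁻¹ by ring, Real.log_inv] at h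
  have : (1:ℝ)/t = t⁻¹ := by ring
  rw [this]; linarith

private noncomputable def uFun (t : ℝ) : ℝ := (t+1) * Real.log t - 2*(t-1)
private noncomputable def hFun (t : ℝ) : ℝ := (2*t+4)*(t*Real.log t - t + 1) - 3*(t-1)^2

private lemma uFun_hasDeriv {t : ℝ} (ht : 0 < t) :
    HasDerivAt uFun (Real.log t + 1/t - 1) t := by
  have h1 : HasDerivAt (fun s : ℝ => (s+1) * Real.log s)
      (1 * Real.log t + (t+1) * t⁻¹) t :=
    ((hasDerivAt_id t).add_const 1).mul (Real.hasDerivAt_log ht.ne')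
  have h2 : HasDerivAt (fun s : ℝ => 2*(s-1)) 2 t := by
    simpa using ((hasDerivAt_id t).sub_const 1).const_mul 2
  have := h1.sub h2
  refine this.congr_deriv ?_
  field_simp
  ring

private lemma hFun_hasDeriv {t : ℝ} (ht : 0 < t) : HasDerivAt hFun (4 * uFun t) t := by
  have hlog : HasDerivAt (fun s : ℝ => s * Real.log s) (Real.log t + 1) t := by
    have := (hasDerivAt_id t).mul (Real.hasDerivAt_log ht.ne')
    refine this.congr_deriv ?_
    field_simp
    simp only [id]; ring
  have h1 : HasDerivAt (fun s : ℝ => s*Real.log s - s + 1) (Real.log t + 1 - 1) t :=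
    (hlog.sub (hasDerivAt_id t)).add_const 1
  have h2 : HasDerivAt (fun s : ℝ => 2*s+4) 2 t := by
    simpa using ((hasDerivAt_id t).const_mul 2).add_const 4
  have h3 := h2.mul h1
  have h4 : HasDerivAt (fun s : ℝ => 3*(s-1)^2) (3*(2*(t-1))) t := by
    have := (((hasDerivAt_id t).sub_const 1).pow 2).const_mul 3
    refine this.congr_deriv ?_
    simp
  have := h3.sub h4
  refine this.congr_deriv ?_
  simp [uFun]
  ring

private lemma uFun_nonneg {t : ℝ} (ht : 1 ≤ t) : 0 ≤ uFun t := by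
  have mono : MonotoneOn uFun (Set.Ioi 0) := by
    apply monotoneOn_of_deriv_nonneg (convex_Ioi 0)
    · intro x hx
      exact (uFun_hasDeriv hx).differentiableAt.continuousAt.continuousWithinAt
    · intro x hx
      rw [interior_Ioi] at hx
      exact (uFun_hasDeriv hx).differentiableAt.differentiableWithinAt
    · intro x hx
      rw [interior_Ioi] at hx
      rw [(uFun_hasDeriv hx).deriv]
      have := log_ge_one_sub_inv hx
      linarith
  have h := mono (Set.mem_Ioi.mpr one_pos) (Set.mem_Ioi.mpr (by linarith)) ht
  have : uFun 1 = 0 := by simp [uFun]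
  linarith

private lemma uFun_nonpos {t : ℝ} (ht0 : 0 < t) (ht : t ≤ 1) : uFun t ≤ 0 := by
  have mono : MonotoneOn uFun (Set.Ioi 0) := by
    apply monotoneOn_of_deriv_nonneg (convex_Ioi 0)
    · intro x hx
      exact (uFun_hasDeriv hx).differentiableAt.continuousAt.continuousWithinAt
    · intro x hx
      rw [interior_Ioi] at hx
      exact (uFun_hasDeriv hx).differentiableAt.differentiableWithinAt
    · intro x hx
      rw [interior_Ioi] at hx
      rw [(uFun_hasDeriv hx).deriv]
      have := log_ge_one_sub_inv hx
      linarith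
  have h := mono (Set.mem_Ioi.mpr ht0) (Set.mem_Ioi.mpr one_pos) ht
  have : uFun 1 = 0 := by simp [uFun]
  linarith

private lemma hFun_one : hFun 1 = 0 := by simp [hFun]

private lemma hFun_nonneg {t : ℝ} (ht : 0 < t) : 0 ≤ hFun t := by
  rcases le_or_gt 1 t with h1 | h1
  · have mono : MonotoneOn hFun (Set.Ici 1) := by
      apply monotoneOn_of_deriv_nonneg (convex_Ici 1)
      · intro x hx
        have hx0 : (0:ℝ) < x := lt_of_lt_of_le one_pos hx
        exact (hFun_hasDeriv hx0).differentiableAt.continuousAt.continuousWithinAt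
      · intro x hx
        rw [interior_Ici] at hx
        have hx0 : (0:ℝ) < x := lt_trans one_pos hx
        exact (hFun_hasDeriv hx0).differentiableAt.differentiableWithinAt
      · intro x hx
        rw [interior_Ici] at hx
        have hx0 : (0:ℝ) < x := lt_trans one_pos hx
        rw [(hFun_hasDeriv hx0).deriv]
        have := uFun_nonneg (le_of_lt hx)
        linarith
    have h := mono (Set.mem_Ici.mpr le_rfl) (Set.mem_Ici.mpr h1) h1
    rw [hFun_one] at h; exact h
  · have anti : AntitoneOn hFun (Set.Ioc 0 1) := by
      apply antitoneOn_of_deriv_nonpos (convex_Ioc 0 1)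
      · intro x hx
        exact (hFun_hasDeriv hx.1).differentiableAt.continuousAt.continuousWithinAt
      · intro x hx
        rw [interior_Ioc] at hx
        exact (hFun_hasDeriv hx.1).differentiableAt.differentiableWithinAt
      · intro x hx
        rw [interior_Ioc] at hx
        rw [(hFun_hasDeriv hx.1).deriv]
        have := uFun_nonpos hx.1 (le_of_lt hx.2)
        linarith
    have h := anti (Set.mem_Ioc.mpr ⟨ht, le_of_lt h1⟩) (Set.mem_Ioc.mpr ⟨one_pos, le_rfl⟩) (le_of_lt h1)
    rw [hFun_one] at h; exact h

private lemma pointwise_ineq {a b : ℝ} (ha : 0 ≤ a) (hb : 0 < b) :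
    3*(a-b)^2 ≤ (2*a+4*b) * (a * Real.log (a/b) - a + b) := by
  rcases eq_or_lt_of_le ha with h | ha'
  · rw [← h]
    have : (0:ℝ) * Real.log (0/b) = 0 := by simp
    rw [this]
    nlinarith
  · have ht : 0 < a/b := by positivity
    have h := hFun_nonneg ht
    have key : hFun (a/b) * b^2 = (2*a+4*b)*(a*Real.log (a/b) - a + b) - 3*(a-b)^2 := by
      unfold hFun
      field_simp
    nlinarith [mul_nonneg h (sq_nonneg b)]



private lemma pinsker_finite' {β : Type*} [Fintype β] (p q : β → ℝ)
    (hp0 : ∀ x, 0 ≤ p x) (hq0 : ∀ x, 0 ≤ q x)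
    (hp1 : ∑ x, p x = 1) (hq1 : ∑ x, q x = 1)
    (hsupp : ∀ x, q x = 0 → p x = 0) :
    (∑ x, |p x - q x|)^2 ≤ 2 * ∑ x, p x * Real.log (p x / q x) := by
  classical
  set g : β → ℝ := fun x => p x * Real.log (p x / q x) - p x + q x with hg
  set r : β → ℝ := fun x => if 2*p x + 4*q x = 0 then 0 else 3*(p x - q x)^2 / (2*p x + 4*q x) with hr
  have hr0 : ∀ x, 0 ≤ r x := by
    intro x
    by_cases h : 2*p x + 4*q x = 0
    · simp [hr, h]
    · have : 0 < 2*p x + 4*q x := lt_of_le_of_ne (by nlinarith [hp0 x, hq0 x]) (Ne.symm h)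
      simp only [hr, if_neg h]
      positivity
  -- Cauchy-Schwarz
  have CS := Finset.sum_mul_sq_le_sq_mul_sq Finset.univ
      (fun x => Real.sqrt ((2*p x + 4*q x)/3)) (fun x => Real.sqrt (r x))
  have hfg : ∀ x : β, Real.sqrt ((2*p x + 4*q x)/3) * Real.sqrt (r x) = |p x - q x| := by
    intro x
    by_cases h : 2*p x + 4*q x = 0
    · have hp : p x = 0 := by nlinarith [hp0 x, hq0 x]
      have hq : q x = 0 := by nlinarith [hp0 x, hq0 x]
      simp [hr, h, hp, hq]
    · have hpos : 0 < 2*p x + 4*q x := lt_of_le_of_ne (by nlinarith [hp0 x, hq0 x]) (Ne.symm h)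
      rw [← Real.sqrt_mul (by positivity)]
      rw [hr]
      simp only [if_neg h]
      rw [show (2*p x + 4*q x)/3 * (3*(p x - q x)^2 / (2*p x + 4*q x)) = (p x - q x)^2 by
        field_simp]
      exact Real.sqrt_sq_eq_abs _
  have hf2 : ∀ x : β, (Real.sqrt ((2*p x + 4*q x)/3))^2 = (2*p x + 4*q x)/3 := by
    intro x
    exact Real.sq_sqrt (by nlinarith [hp0 x, hq0 x])
  have hg2 : ∀ x : β, (Real.sqrt (r x))^2 = r x := fun x => Real.sq_sqrt (hr0 x)
  rw [Finset.sum_congr rfl (fun x _ => hfg x)] at CS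
  rw [Finset.sum_congr rfl (fun x _ => hf2 x), Finset.sum_congr rfl (fun x _ => hg2 x)] at CS
  have hsum1 : ∑ x, (2*p x + 4*q x)/3 = 2 := by
    rw [show (fun x => (2*p x + 4*q x)/3) = (fun x => (2/3) * p x + (4/3) * q x) by funext x; ring]
    rw [Finset.sum_add_distrib, ← Finset.mul_sum, ← Finset.mul_sum, hp1, hq1]
    norm_num
  rw [hsum1] at CS
  -- r x ≤ g x
  have hrg : ∀ x : β, r x ≤ g x := by
    intro x
    by_cases h : 2*p x + 4*q x = 0
    · have hp : p x = 0 := by nlinarith [hp0 x, hq0 x]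
      have hq : q x = 0 := by nlinarith [hp0 x, hq0 x]
      simp [hr, hg, h, hp, hq]
    · have hqx : 0 < q x := by
        rcases lt_or_eq_of_le (hq0 x) with h' | h'
        · exact h'
        · exfalso
          have hp : p x = 0 := hsupp x h'.symm
          exact h (by rw [hp, ← h']; ring)
      have hpos : 0 < 2*p x + 4*q x := by nlinarith [hp0 x]
      simp only [hr, if_neg h]
      rw [div_le_iff₀ hpos]
      have := pointwise_ineq (hp0 x) hqx
      simp only [hg]
      nlinarith
  have hsum_g : ∑ x, g x = ∑ x, p x * Real.log (p x / q x) := by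
    simp only [hg]
    rw [Finset.sum_add_distrib, Finset.sum_sub_distrib, hp1, hq1]
    ring
  calc (∑ x, |p x - q x|)^2 ≤ 2 * ∑ x, r x := CS
    _ ≤ 2 * ∑ x, g x := by
        have := Finset.sum_le_sum (fun x (_ : x ∈ Finset.univ) => hrg x)
        linarith
    _ = 2 * ∑ x, p x * Real.log (p x / q x) := by rw [hsum_g]


open Classical in
private lemma superadd' {n : ℕ} {α : Fin n → Type*} [∀ i, Fintype (α i)]
    (p : (∀ i, α i) → ℝ) (q : ∀ i, α i → ℝ)
    (hp0 : ∀ v, 0 ≤ p v) (hq0 : ∀ i x, 0 ≤ q i x)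
    (loglb : ∀ {t : ℝ}, 0 < t → 1 - 1/t ≤ Real.log t)
    (hp1 : ∑ v, p v = 1)
    (hsupp : ∀ i x, q i x = 0 →
      (∑ v ∈ Finset.univ.filter (fun v => v i = x), p v) = 0) :
    ∑ i, ∑ x : α i,
        (∑ v ∈ Finset.univ.filter (fun v => v i = x), p v) *
          Real.log ((∑ v ∈ Finset.univ.filter (fun v => v i = x), p v) / q i x)
      ≤ ∑ v, p v * Real.log (p v / ∏ i, q i (v i)) := by
  classical
  set pm : ∀ i, α i → ℝ := fun i x => ∑ v ∈ Finset.univ.filter (fun v => v i = x), p v with hpm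
  have hpm0 : ∀ i x, 0 ≤ pm i x := fun i x => Finset.sum_nonneg (fun v _ => hp0 v)
  have hpm1 : ∀ i, ∑ x, pm i x = 1 := by
    intro i
    rw [hpm]
    rw [Finset.sum_fiberwise_of_maps_to (fun v _ => Finset.mem_univ (v i)) p]
    exact hp1
  have hple : ∀ (v : ∀ i, α i) i, p v ≤ pm i (v i) := by
    intro v i
    exact Finset.single_le_sum (fun w _ => hp0 w)
      (Finset.mem_filter.mpr ⟨Finset.mem_univ v, rfl⟩)
  -- rewrite LHS
  have lhs_eq : ∀ i, ∑ x : α i, pm i x * Real.log (pm i x / q i x)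
      = ∑ v, p v * Real.log (pm i (v i) / q i (v i)) := by
    intro i
    rw [← Finset.sum_fiberwise_of_maps_to (fun v (_ : v ∈ Finset.univ) => Finset.mem_univ (v i))
      (fun v => p v * Real.log (pm i (v i) / q i (v i)))]
    apply Finset.sum_congr rfl
    intro x _
    rw [hpm, Finset.sum_mul]
    apply Finset.sum_congr rfl
    intro v hv
    rw [(Finset.mem_filter.mp hv).2]
  have lhs_eq2 : ∑ i, ∑ x : α i, pm i x * Real.log (pm i x / q i x)
      = ∑ v, p v * ∑ i, Real.log (pm i (v i) / q i (v i)) := by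
    rw [Finset.sum_congr rfl (fun i _ => lhs_eq i), Finset.sum_comm]
    exact Finset.sum_congr rfl (fun v _ => (Finset.mul_sum _ _ _).symm)
  rw [lhs_eq2]
  -- restrict to support
  set S : Finset (∀ i, α i) := Finset.univ.filter (fun v => p v ≠ 0) with hS
  have hrestrict : ∀ f : (∀ i, α i) → ℝ,
      ∑ v ∈ S, p v * f v = ∑ v, p v * f v := by
    intro f
    apply Finset.sum_subset (Finset.filter_subset _ _)
    intro v _ hv
    have : p v = 0 := by
      by_contra h
      exact hv (Finset.mem_filter.mpr ⟨Finset.mem_univ v, h⟩)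
    rw [this, zero_mul]
  rw [← hrestrict (fun v => ∑ i, Real.log (pm i (v i) / q i (v i))),
      ← hrestrict (fun v => Real.log (p v / ∏ i, q i (v i)))]
  -- key pointwise bound on S
  have key : ∀ v ∈ S, p v * ∑ i, Real.log (pm i (v i) / q i (v i))
      ≤ p v * Real.log (p v / ∏ i, q i (v i)) - (p v - ∏ i, pm i (v i)) := by
    intro v hv
    have hpv : 0 < p v :=
      lt_of_le_of_ne (hp0 v) (Ne.symm (Finset.mem_filter.mp hv).2)
    have hpmv : ∀ i, 0 < pm i (v i) := fun i => lt_of_lt_of_le hpv (hple v i)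
    have hqv : ∀ i, 0 < q i (v i) := by
      intro i
      rcases lt_or_eq_of_le (hq0 i (v i)) with h | h
      · exact h
      · exfalso
        have := hsupp i (v i) h.symm
        exact absurd this (ne_of_gt (hpmv i))
    have hlogsum : ∑ i, Real.log (pm i (v i) / q i (v i))
        = Real.log ((∏ i, pm i (v i)) / ∏ i, q i (v i)) := by
      rw [← Real.log_prod (fun i _ => by
        have := hpmv i; have := hqv i; positivity)]
      rw [Finset.prod_div_distrib]
    rw [hlogsum]
    have hB : 0 < ∏ i, pm i (v i) := Finset.prod_pos (fun i _ => hpmv i)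
    have hC : 0 < ∏ i, q i (v i) := Finset.prod_pos (fun i _ => hqv i)
    set A := p v
    set B := ∏ i, pm i (v i)
    set C := ∏ i, q i (v i)
    rw [Real.log_div (ne_of_gt hB) (ne_of_gt hC), Real.log_div (ne_of_gt hpv) (ne_of_gt hC)]
    have hAB : 1 - B/A ≤ Real.log (A/B) := by
      have := loglb (show 0 < A/B by positivity)
      rwa [show 1/(A/B) = B/A by field_simp] at this
    rw [Real.log_div (ne_of_gt hpv) (ne_of_gt hB)] at hAB
    have h2 : A * (1 - B/A) ≤ A * (Real.log A - Real.log B) :=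
      mul_le_mul_of_nonneg_left hAB hpv.le
    have h3 : A * (1 - B/A) = A - B := by field_simp
    rw [mul_sub] at h2
    rw [mul_sub, mul_sub]
    linarith
  -- sum the pointwise bound
  have hsum_key := Finset.sum_le_sum key
  have hSp : ∑ v ∈ S, p v = 1 := by
    have := hrestrict (fun _ => 1)
    simp only [mul_one] at this
    rw [this, hp1]
  have hSprod : ∑ v ∈ S, ∏ i, pm i (v i) ≤ 1 := by
    have h1 : ∑ v ∈ S, ∏ i, pm i (v i) ≤ ∑ v : ∀ j, α j, ∏ i, pm i (v i) := by
      apply Finset.sum_le_sum_of_subset_of_nonneg (Finset.filter_subset _ _)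
      intro v _ _
      exact Finset.prod_nonneg (fun i _ => hpm0 i (v i))
    have h2 : ∑ v : ∀ j, α j, ∏ i, pm i (v i) = ∏ i, ∑ x, pm i x := by
      rw [Finset.prod_univ_sum]
      rw [Fintype.piFinset_univ]
    rw [h2, Finset.prod_congr rfl (fun i _ => hpm1 i), Finset.prod_const_one] at h1
    exact h1
  have expand : ∑ v ∈ S, (p v * Real.log (p v / ∏ i, q i (v i)) - (p v - ∏ i, pm i (v i)))
      = ∑ v ∈ S, p v * Real.log (p v / ∏ i, q i (v i)) - ((∑ v ∈ S, p v) - ∑ v ∈ S, ∏ i, pm i (v i)) := by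
    rw [Finset.sum_sub_distrib, Finset.sum_sub_distrib]
  rw [expand, hSp] at hsum_key
  linarith


open Classical in
/-- Raz/Holenstein: If `V = (V₁, …, Vₙ)` has a product distribution under a
finite probability space `(Ω, P)` and `F` is an event with `P[F] > 0`, then
`(1/n) ∑ᵢ ‖P_{Vᵢ|F} - P_{Vᵢ}‖₁ ≤ √((2/n) log₂(1/P[F]))`. -/
theorem marginals_close_after_conditioning
    {Ω : Type*} [Fintype Ω] {n : ℕ} (hn : 0 < n)
    {α : Fin n → Type*} [∀ i, Fintype (α i)]
    (P : Ω → ℝ) (hP0 : ∀ ω, 0 ≤ P ω) (hP1 : ∑ ω, P ω = 1)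
    (V : Ω → ∀ i, α i)
    (hprod : ∀ v : ∀ i, α i,
      ∑ ω ∈ Finset.univ.filter (fun ω => V ω = v), P ω
        = ∏ i, ∑ ω ∈ Finset.univ.filter (fun ω => V ω i = v i), P ω)
    (F : Finset Ω) (hF : 0 < ∑ ω ∈ F, P ω) :
    (1 / n : ℝ) * ∑ i, ∑ x : α i,
        |(∑ ω ∈ F.filter (fun ω => V ω i = x), P ω) / (∑ ω ∈ F, P ω)
          - ∑ ω ∈ Finset.univ.filter (fun ω => V ω i = x), P ω|
      ≤ Real.sqrt ((2 / n) * Real.logb 2 (1 / ∑ ω ∈ F, P ω)) := by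
  classical
  set c : ℝ := ∑ ω ∈ F, P ω with hc
  have hc1 : c ≤ 1 := by
    rw [← hP1]
    exact Finset.sum_le_sum_of_subset_of_nonneg (Finset.subset_univ F)
      (fun ω _ _ => hP0 ω)
  set p : (∀ i, α i) → ℝ := fun v => (∑ ω ∈ F.filter (fun ω => V ω = v), P ω)/c with hp
  set q : ∀ i, α i → ℝ := fun i x => ∑ ω ∈ Finset.univ.filter (fun ω => V ω i = x), P ω with hq
  set pm : ∀ i, α i → ℝ := fun i x => (∑ ω ∈ F.filter (fun ω => V ω i = x), P ω)/c with hpm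
  have hp0 : ∀ v, 0 ≤ p v := fun v =>
    div_nonneg (Finset.sum_nonneg (fun ω _ => hP0 ω)) hF.le
  have hq0 : ∀ i x, 0 ≤ q i x := fun i x => Finset.sum_nonneg (fun ω _ => hP0 ω)
  have hpm0 : ∀ i x, 0 ≤ pm i x := fun i x =>
    div_nonneg (Finset.sum_nonneg (fun ω _ => hP0 ω)) hF.le
  -- fiberwise identities
  have fiber : ∀ (G : Finset Ω) i (x : α i),
      ∑ v ∈ Finset.univ.filter (fun v => v i = x),
        ∑ ω ∈ G.filter (fun ω => V ω = v), P ω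
      = ∑ ω ∈ G.filter (fun ω => V ω i = x), P ω := by
    intro G i x
    rw [← Finset.sum_fiberwise_of_maps_to
      (g := V) (t := Finset.univ.filter (fun v => v i = x))
      (fun ω hω => Finset.mem_filter.mpr
        ⟨Finset.mem_univ _, (Finset.mem_filter.mp hω).2⟩) P]
    apply Finset.sum_congr rfl
    intro v hv
    have hvx : v i = x := (Finset.mem_filter.mp hv).2
    apply Finset.sum_congr _ (fun _ _ => rfl)
    rw [Finset.filter_filter]
    apply Finset.filter_congr
    intro ω _
    constructor <;> intro h
    · first
      | exact h.2
      | exact ⟨by rw [h]; exact hvx, h⟩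
    · first
      | exact h.2
      | exact ⟨by rw [h]; exact hvx, h⟩
  have fiber_tot : ∀ (G : Finset Ω),
      ∑ v : ∀ i, α i, ∑ ω ∈ G.filter (fun ω => V ω = v), P ω = ∑ ω ∈ G, P ω := by
    intro G
    exact Finset.sum_fiberwise_of_maps_to (g := V) (fun ω _ => Finset.mem_univ _) P
  -- marginals of p are pm
  have marg : ∀ i (x : α i), ∑ v ∈ Finset.univ.filter (fun v => v i = x), p v = pm i x := by
    intro i x
    rw [hp, hpm]
    simp only
    rw [← Finset.sum_div, fiber F i x]
  have hp1 : ∑ v, p v = 1 := by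
    rw [hp]
    simp only
    rw [← Finset.sum_div, fiber_tot F, ← hc, div_self (ne_of_gt hF)]
  have hpm1 : ∀ i, ∑ x, pm i x = 1 := by
    intro i
    rw [hpm]
    simp only
    rw [← Finset.sum_div]
    rw [Finset.sum_fiberwise_of_maps_to (g := fun ω => V ω i)
      (fun ω _ => Finset.mem_univ _) P]
    rw [← hc, div_self (ne_of_gt hF)]
  have hq1 : ∀ i, ∑ x, q i x = 1 := by
    intro i
    rw [hq]
    simp only
    rw [Finset.sum_fiberwise_of_maps_to (g := fun ω => V ω i)
      (fun ω _ => Finset.mem_univ _) P]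
    exact hP1
  have hsupp : ∀ i (x : α i), q i x = 0 → pm i x = 0 := by
    intro i x h
    have hle : ∑ ω ∈ F.filter (fun ω => V ω i = x), P ω
        ≤ ∑ ω ∈ Finset.univ.filter (fun ω => V ω i = x), P ω :=
      Finset.sum_le_sum_of_subset_of_nonneg
        (Finset.filter_subset_filter _ (Finset.subset_univ F)) (fun ω _ _ => hP0 ω)
    have hge : 0 ≤ ∑ ω ∈ F.filter (fun ω => V ω i = x), P ω :=
      Finset.sum_nonneg (fun ω _ => hP0 ω)
    have h' : ∑ ω ∈ Finset.univ.filter (fun ω => V ω i = x), P ω = 0 := h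
    have : ∑ ω ∈ F.filter (fun ω => V ω i = x), P ω = 0 :=
      le_antisymm (h' ▸ hle) hge
    rw [hpm]; simp only; rw [this, zero_div]
  -- joint KL bound
  have joint_le : ∑ v, p v * Real.log (p v / ∏ i, q i (v i)) ≤ Real.log (1/c) := by
    have term : ∀ v : ∀ i, α i, p v * Real.log (p v / ∏ i, q i (v i))
        ≤ p v * Real.log (1/c) := by
      intro v
      rcases eq_or_lt_of_le (hp0 v) with h | h
      · rw [← h]; simp
      · apply mul_le_mul_of_nonneg_left _ (le_of_lt h)
        have hQ : ∏ i, q i (v i) = ∑ ω ∈ Finset.univ.filter (fun ω => V ω = v), P ω :=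
          (hprod v).symm
        have hnum : p v * c = ∑ ω ∈ F.filter (fun ω => V ω = v), P ω := by
          rw [hp]; simp only; rw [div_mul_cancel₀ _ (ne_of_gt hF)]
        have hle : p v * c ≤ ∏ i, q i (v i) := by
          rw [hnum, hQ]
          exact Finset.sum_le_sum_of_subset_of_nonneg
            (Finset.filter_subset_filter _ (Finset.subset_univ F)) (fun ω _ _ => hP0 ω)
        have hQpos : 0 < ∏ i, q i (v i) := lt_of_lt_of_le (by positivity) hle
        apply Real.log_le_log (by positivity)
        rw [div_le_div_iff₀ hQpos hF, one_mul]
        exact hle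
    calc ∑ v, p v * Real.log (p v / ∏ i, q i (v i))
        ≤ ∑ v, p v * Real.log (1/c) := Finset.sum_le_sum (fun v _ => term v)
      _ = Real.log (1/c) := by rw [← Finset.sum_mul, hp1, one_mul]
  -- per-coordinate Pinsker
  set S : Fin n → ℝ := fun i => ∑ x : α i, |pm i x - q i x| with hSdef
  have hS0 : ∀ i, 0 ≤ S i := fun i => Finset.sum_nonneg (fun x _ => abs_nonneg _)
  set K : Fin n → ℝ := fun i => ∑ x : α i, pm i x * Real.log (pm i x / q i x) with hK
  have pins : ∀ i, (S i)^2 ≤ 2 * K i := fun i =>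
    pinsker_finite' (pm i) (q i) (hpm0 i) (hq0 i) (hpm1 i) (hq1 i) (hsupp i)
  -- superadditivity
  have hsuper : ∑ i, K i ≤ ∑ v, p v * Real.log (p v / ∏ i, q i (v i)) := by
    have h := superadd' p q hp0 hq0 (fun {t} ht => log_ge_one_sub_inv ht) hp1
      (fun i x hx => by rw [marg i x]; exact hsupp i x hx)
    calc ∑ i, K i
        = ∑ i, ∑ x : α i, (∑ v ∈ Finset.univ.filter (fun v => v i = x), p v) *
            Real.log ((∑ v ∈ Finset.univ.filter (fun v => v i = x), p v) / q i x) := by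
          apply Finset.sum_congr rfl; intro i _
          apply Finset.sum_congr rfl; intro x _
          rw [marg i x]
      _ ≤ _ := h
  have hKtot : ∑ i, K i ≤ Real.log (1/c) := le_trans hsuper joint_le
  have CS : (∑ i, S i)^2 ≤ (n : ℝ) * ∑ i, (S i)^2 := by
    have h := Finset.sum_mul_sq_le_sq_mul_sq Finset.univ (fun _ : Fin n => (1:ℝ)) S
    simpa using h
  have hsum2 : ∑ i, (S i)^2 ≤ 2 * Real.log (1/c) := by
    calc ∑ i, (S i)^2 ≤ ∑ i, 2 * K i := Finset.sum_le_sum (fun i _ => pins i)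
      _ = 2 * ∑ i, K i := by rw [Finset.mul_sum]
      _ ≤ 2 * Real.log (1/c) := by linarith
  have hlog2pos : 0 < Real.log 2 := Real.log_pos (by norm_num)
  have hlog2le : Real.log 2 ≤ 1 := by
    have := Real.log_le_sub_one_of_pos (show (0:ℝ) < 2 by norm_num); linarith
  have hL0 : 0 ≤ Real.log (1/c) := Real.log_nonneg (by rw [le_div_iff₀ hF]; linarith)
  have hlogb : Real.log (1/c) ≤ Real.logb 2 (1/c) := by
    rw [Real.logb, le_div_iff₀ hlog2pos]
    nlinarith
  have hn' : (0:ℝ) < n := by exact_mod_cast hn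
  have hLb0 : 0 ≤ Real.logb 2 (1/c) := le_trans hL0 hlogb
  have goal_eq : (∑ i, ∑ x : α i,
      |(∑ ω ∈ F.filter (fun ω => V ω i = x), P ω) / c
        - ∑ ω ∈ Finset.univ.filter (fun ω => V ω i = x), P ω|) = ∑ i, S i := by
    apply Finset.sum_congr rfl; intro i _
    apply Finset.sum_congr rfl; intro x _
    rfl
  rw [goal_eq]
  rw [Real.le_sqrt (mul_nonneg (by positivity) (Finset.sum_nonneg (fun i _ => hS0 i)))
    (mul_nonneg (by positivity) hLb0)]
  have h1 : (∑ i, S i)^2 ≤ 2 * (n:ℝ) * Real.logb 2 (1/c) := by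
    calc (∑ i, S i)^2 ≤ (n:ℝ) * ∑ i, (S i)^2 := CS
      _ ≤ (n:ℝ) * (2*Real.log (1/c)) := mul_le_mul_of_nonneg_left hsum2 hn'.le
      _ = 2*(n:ℝ) * Real.log (1/c) := by ring
      _ ≤ 2 * (n:ℝ) * Real.logb 2 (1/c) := mul_le_mul_of_nonneg_left hlogb (by positivity)
  calc ((1/n:ℝ) * ∑ i, S i)^2 = (∑ i, S i)^2 * (1/(n:ℝ)^2) := by ring
    _ ≤ (2 * (n:ℝ) * Real.logb 2 (1/c)) * (1/(n:ℝ)^2) :=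
        mul_le_mul_of_nonneg_right h1 (by positivity)
    _ = (2/n) * Real.logb 2 (1/c) := by field_simp
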